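/- Let K >= 4 be an integer and set N = K-2, M = N^2 - 1. Let P be the convex hull in R^2 of the five points O = (0,0), A = (MN-1, 0), B = (N(M+N)-1, K*N^2-1), C = (M+N-1, K*N-1), D = (N-1, N). Then the number of integer lattice points contained in P equals (K*M*N^3 - K*N^2 + 2N + M + 3)/2. Equivalently, setting m = N(M+N)-1, the quantity m(m+1)/2 + 1 minus this number of lattice points equals (K-2)(K-3)/2. -/

import Mathlib

set_option maxHeartbeats 1600000
open Finset

lemma icc_eq_ioc (a b : ℤ) : Finset.Icc a b = Finset.Ioc (a-1) b := by
  ext x; simp only [Finset.mem_Icc, Finset.mem_Ioc]; omega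

lemma ioc_singleton (m : ℤ) : Finset.Ioc (m-1) m = {m} := by
  ext x; simp only [Finset.mem_Ioc, Finset.mem_singleton]; omega

lemma sum_split (f : ℤ → ℤ) (a b c : ℤ) (hab : a - 1 ≤ b) (hbc : b ≤ c) :
    ∑ x ∈ Finset.Icc a c, f x = (∑ x ∈ Finset.Icc a b, f x) + ∑ x ∈ Finset.Icc (b+1) c, f x := by
  have hu : Finset.Icc a c = Finset.Icc a b ∪ Finset.Icc (b+1) c := by
    ext x; simp only [Finset.mem_union, Finset.mem_Icc]; omega
  have hd : Disjoint (Finset.Icc a b) (Finset.Icc (b+1) c) := by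
    rw [Finset.disjoint_left]
    intro x hx hx'
    simp only [Finset.mem_Icc] at hx hx'
    omega
  rw [hu, Finset.sum_union hd]

lemma sum_top (f : ℤ → ℤ) (a b : ℤ) (h : a - 1 ≤ b) :
    ∑ x ∈ Finset.Icc a (b+1), f x = (∑ x ∈ Finset.Icc a b, f x) + f (b+1) := by
  rw [sum_split f a b (b+1) h (by omega)]
  congr 1
  rw [show Finset.Icc (b+1) (b+1) = {b+1} from Finset.Icc_self _, Finset.sum_singleton]

lemma sum_shift (f : ℤ → ℤ) (c a b : ℤ) :
    ∑ x ∈ Finset.Icc (c+a) (c+b), f x = ∑ t ∈ Finset.Icc a b, f (c + t) := by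
  rw [← Finset.map_add_left_Icc, Finset.sum_map]; rfl

lemma card_icc (a b : ℤ) (h : a ≤ b + 1) : ((Finset.Icc a b).card : ℤ) = b + 1 - a := by
  rw [Int.card_Icc, Int.toNat_of_nonneg (by omega)]

lemma gauss2 (m : ℤ) (hm : 0 ≤ m) : 2 * ∑ x ∈ Finset.Icc (0:ℤ) m, x = m * (m+1) := by
  refine Int.le_induction (motive := fun m _ => 2 * ∑ x ∈ Finset.Icc (0:ℤ) m, x = m * (m+1)) ?_ ?_ m hm
  · show 2 * ∑ x ∈ Finset.Icc (0:ℤ) 0, x = 0 * (0+1)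
    rw [Finset.Icc_self, Finset.sum_singleton]; ring
  · intro k hk ih
    show 2 * ∑ x ∈ Finset.Icc (0:ℤ) (k+1), x = (k+1) * (k+1+1)
    rw [sum_top _ 0 k (by omega), mul_add]
    linear_combination ih

lemma ediv_cross (a b c d : ℤ) (hb : 0 < b) (hd : 0 < d) (h : a * d ≤ c * b) : a / b ≤ c / d := by
  rw [Int.le_ediv_iff_mul_le hd]
  have h1 : b * (a / b) ≤ a := by
    have := Int.mul_ediv_add_emod a b
    have := Int.emod_nonneg a (by omega : b ≠ 0)
    omega
  have h2 : (a / b) * d * b ≤ c * b := by nlinarith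
  exact le_of_mul_le_mul_right h2 hb

lemma mul_ediv_le (a b : ℤ) (hb : 0 < b) : b * (a / b) ≤ a := by
  have := Int.mul_ediv_add_emod a b
  have := Int.emod_nonneg a (by omega : b ≠ 0)
  omega

lemma ediv_add_neg (b c : ℤ) (hb : 0 < b) (h : ¬ b ∣ c) : c / b + (-c) / b = -1 := by
  have h1 := Int.mul_ediv_add_emod c b
  have h2 := Int.mul_ediv_add_emod (-c) b
  have h3 : 0 ≤ c % b := Int.emod_nonneg c (by omega)
  have h4 : c % b < b := Int.emod_lt_of_pos c hb
  have h5 : 0 ≤ (-c) % b := Int.emod_nonneg (-c) (by omega)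
  have h6 : (-c) % b < b := Int.emod_lt_of_pos (-c) hb
  have h7 : c % b ≠ 0 := fun hc => h (Int.dvd_iff_emod_eq_zero.mpr hc)
  -- b * (c/b + (-c)/b) = -(c%b + (-c)%b)
  have key : b * (c / b + (-c) / b) = -(c % b + (-c) % b) := by linarith
  have hs : c / b + (-c) / b = -1 ∨ c / b + (-c) / b = 0 := by
    rcases lt_trichotomy (c / b + (-c) / b) (-1) with hlt | he | hgt
    · exfalso
      have : b * (c / b + (-c) / b) ≤ b * (-2) := by
        apply mul_le_mul_of_nonneg_left (by omega) (by omega)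
      omega
    · left; exact he
    · right
      have h8 : 0 ≤ c / b + (-c) / b := by omega
      have : 0 ≤ b * (c / b + (-c) / b) := mul_nonneg (by omega) h8
      have : b * (c / b + (-c) / b) ≤ 0 := by omega
      omega
  rcases hs with hs | hs
  · exact hs
  · exfalso
    rw [hs, mul_zero] at key
    omega

lemma ediv_pred (b c : ℤ) (hb : 0 < b) (h : ¬ b ∣ c) : (c - 1) / b = c / b := by
  have h1 := Int.mul_ediv_add_emod c b
  have h3 : 0 ≤ c % b := Int.emod_nonneg c (by omega)
  have h4 : c % b < b := Int.emod_lt_of_pos c hb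
  have h7 : c % b ≠ 0 := fun hc => h (Int.dvd_iff_emod_eq_zero.mpr hc)
  have : c - 1 = (c % b - 1) + (c / b) * b := by linarith
  rw [this, Int.add_mul_ediv_right _ _ (by omega : b ≠ 0),
    Int.ediv_eq_zero_of_lt (by omega) (by omega), zero_add]

lemma ceil_le_iff (b c y : ℤ) (hb : 0 < b) : (c-1)/b + 1 ≤ y ↔ c ≤ b * y := by
  constructor
  · intro h
    have h2 : (c-1)/b < y := by omega
    rw [Int.ediv_lt_iff_lt_mul hb] at h2
    nlinarith
  · intro h
    have : (c-1)/b < y := by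
      rw [Int.ediv_lt_iff_lt_mul hb]; nlinarith
    omega

lemma not_dvd_mul (a b t : ℤ) (hco : IsCoprime b a) (h1 : 0 < t) (h2 : t < b) : ¬ b ∣ a * t := by
  intro hd
  have : b ∣ t := hco.dvd_of_dvd_mul_left hd
  have := Int.le_of_dvd h1 this
  omega

lemma period_sum (a b : ℤ) (hb : 0 < b) (hco : IsCoprime b a) :
    2 * ∑ t ∈ Finset.Icc (1:ℤ) (b-1), a * t / b = (a-1)*(b-1) := by
  have hrefl : ∑ t ∈ Finset.Icc (1:ℤ) (b-1), a * t / b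
      = ∑ t ∈ Finset.Icc (1:ℤ) (b-1), a * (b - t) / b := by
    apply Finset.sum_nbij' (i := fun t => b - t) (j := fun t => b - t)
    all_goals intro x hx
    all_goals simp only [Finset.mem_Icc] at *
    · omega
    · omega
    · omega
    · omega
    · ring_nf
  have key : ∀ t ∈ Finset.Icc (1:ℤ) (b-1), a * t / b + a * (b - t) / b = a - 1 := by
    intro t ht
    simp only [Finset.mem_Icc] at ht
    have hnd : ¬ b ∣ a * t := not_dvd_mul a b t hco (by omega) (by omega)
    have : a * (b - t) = (-(a*t)) + a * b := by ring
    rw [this, Int.add_mul_ediv_right _ _ (by omega : b ≠ 0)]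
    have := ediv_add_neg b (a*t) hb hnd
    omega
  calc 2 * ∑ t ∈ Finset.Icc (1:ℤ) (b-1), a * t / b
      = (∑ t ∈ Finset.Icc (1:ℤ) (b-1), a * t / b)
        + ∑ t ∈ Finset.Icc (1:ℤ) (b-1), a * (b - t) / b := by rw [← hrefl]; ring
    _ = ∑ t ∈ Finset.Icc (1:ℤ) (b-1), (a * t / b + a * (b - t) / b) := by
        rw [← Finset.sum_add_distrib]
    _ = ∑ t ∈ Finset.Icc (1:ℤ) (b-1), (a - 1) := Finset.sum_congr rfl key
    _ = (a-1)*(b-1) := by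
        rw [Finset.sum_const, nsmul_eq_mul, card_icc 1 (b-1) (by omega)]
        ring

lemma period_sum0 (a b : ℤ) (hb : 0 < b) (hco : IsCoprime b a) :
    2 * ∑ t ∈ Finset.Icc (0:ℤ) (b-1), a * t / b = (a-1)*(b-1) := by
  rw [sum_split _ 0 0 (b-1) (by omega) (by omega), Finset.Icc_self, Finset.sum_singleton,
    show (0:ℤ)+1 = 1 by norm_num, mul_zero, Int.zero_ediv]
  have := period_sum a b hb hco
  linear_combination this

lemma multi_sum (a b : ℤ) (hb : 0 < b) (hco : IsCoprime b a) (k : ℤ) (hk : 0 ≤ k) :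
    2 * ∑ t ∈ Finset.Icc (0:ℤ) (k*b - 1), a * t / b = k*(a-1)*(b-1) + a*b*k*(k-1) := by
  refine Int.le_induction (motive := fun k _ => 2 * ∑ t ∈ Finset.Icc (0:ℤ) (k*b - 1), a * t / b
      = k*(a-1)*(b-1) + a*b*k*(k-1)) ?_ ?_ k hk
  · show 2 * ∑ t ∈ Finset.Icc (0:ℤ) (0*b - 1), a * t / b = 0*(a-1)*(b-1) + a*b*0*(0-1)
    rw [Finset.Icc_eq_empty (by omega : ¬ (0:ℤ) ≤ 0 * b - 1)]
    simp
  · intro k hk ih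
    show 2 * ∑ t ∈ Finset.Icc (0:ℤ) ((k+1)*b - 1), a * t / b
        = (k+1)*(a-1)*(b-1) + a*b*(k+1)*(k+1-1)
    have hsplit := sum_split (fun t => a * t / b) 0 (k*b - 1) ((k+1)*b - 1)
      (by nlinarith) (by nlinarith)
    rw [show k*b - 1 + 1 = k*b by ring] at hsplit
    have hshift : ∑ t ∈ Finset.Icc (k*b) ((k+1)*b - 1), a * t / b
        = ∑ u ∈ Finset.Icc (0:ℤ) (b-1), (a * u / b + a * k) := by
      rw [show ((k:ℤ)*b) = k*b + 0 by ring, show ((k:ℤ)+1)*b - 1 = k*b + (b-1) by ring,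
        sum_shift]
      apply Finset.sum_congr rfl
      intro u hu
      rw [show a * (k*b + u) = a * u + (a*k) * b by ring,
        Int.add_mul_ediv_right _ _ (by omega : b ≠ 0)]
    rw [hsplit, hshift, Finset.sum_add_distrib, Finset.sum_const, nsmul_eq_mul,
      card_icc 0 (b-1) (by omega)]
    have hP := period_sum0 a b hb hco
    linear_combination ih + hP
open Finset

lemma mem_tri (v1 v2 p : ℝ × ℝ) (hd : 0 < v1.1*v2.2 - v1.2*v2.1)
    (h1 : 0 ≤ p.1*v2.2 - p.2*v2.1) (h2 : 0 ≤ v1.1*p.2 - v1.2*p.1)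
    (h3 : p.1*v2.2 - p.2*v2.1 + (v1.1*p.2 - v1.2*p.1) ≤ v1.1*v2.2 - v1.2*v2.1) :
    p ∈ convexHull ℝ ({(0,0), v1, v2} : Set (ℝ × ℝ)) := by
  set d := v1.1*v2.2 - v1.2*v2.1 with hd'
  set l1 := (p.1*v2.2 - p.2*v2.1)/d with hl1
  set l2 := (v1.1*p.2 - v1.2*p.1)/d with hl2
  have hl1n : 0 ≤ l1 := div_nonneg h1 (le_of_lt hd)
  have hl2n : 0 ≤ l2 := div_nonneg h2 (le_of_lt hd)
  have hsum : l1 + l2 ≤ 1 := by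
    rw [hl1, hl2, ← add_div, div_le_one hd]
    linarith
  have hp : p = l1 • v1 + l2 • v2 := by
    have hdne : d ≠ 0 := ne_of_gt hd
    apply Prod.ext
    · show p.1 = l1 * v1.1 + l2 * v2.1
      rw [hl1, hl2]
      field_simp
      ring
    · show p.2 = l1 * v1.2 + l2 * v2.2
      rw [hl1, hl2]
      field_simp
      ring
  have hconv := convex_convexHull ℝ ({(0,0), v1, v2} : Set (ℝ × ℝ))
  have h0m : ((0,0) : ℝ × ℝ) ∈ convexHull ℝ ({(0,0), v1, v2} : Set (ℝ × ℝ)) :=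
    subset_convexHull ℝ _ (by simp)
  have h1m : v1 ∈ convexHull ℝ ({(0,0), v1, v2} : Set (ℝ × ℝ)) :=
    subset_convexHull ℝ _ (by simp)
  have h2m : v2 ∈ convexHull ℝ ({(0,0), v1, v2} : Set (ℝ × ℝ)) :=
    subset_convexHull ℝ _ (by simp)
  rcases eq_or_lt_of_le (by linarith : (0:ℝ) ≤ l1 + l2) with hs0 | hs0
  · have hl10 : l1 = 0 := by linarith
    have hl20 : l2 = 0 := by linarith
    rw [hp, hl10, hl20]
    simpa [Prod.mk_zero_zero] using h0m
  · set s := l1 + l2 with hs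
    have hw : (l1/s) • v1 + (l2/s) • v2 ∈ convexHull ℝ ({(0,0), v1, v2} : Set (ℝ × ℝ)) := by
      apply hconv h1m h2m (div_nonneg hl1n (le_of_lt hs0)) (div_nonneg hl2n (le_of_lt hs0))
      field_simp
      exact hs.symm
    have := hconv h0m hw (by linarith : (0:ℝ) ≤ 1 - s) (le_of_lt hs0) (by ring)
    have heq : (1 - s) • ((0,0) : ℝ × ℝ) + s • ((l1/s) • v1 + (l2/s) • v2) = p := by
      rw [hp, smul_add, smul_smul, smul_smul, mul_div_cancel₀ _ (ne_of_gt hs0),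
        mul_div_cancel₀ _ (ne_of_gt hs0)]
      simp
    rwa [heq] at this

lemma hull_eq (ν : ℝ) (hν : 2 ≤ ν) :
    convexHull ℝ ({((0:ℝ),(0:ℝ)),
      (ν^3-ν-1, 0),
      (ν^3+ν^2-ν-1, ν^3+2*ν^2-1),
      (ν^2+ν-2, ν^2+2*ν-1),
      (ν-1, ν)} : Set (ℝ×ℝ)) =
    {p : ℝ×ℝ | 0 ≤ p.2 ∧ (ν-1)*p.2 ≤ ν*p.1 ∧
      (ν^2-1)*(p.2-(ν^2+2*ν-1)) ≤ (ν^2+ν-1)*(p.1-(ν^2+ν-2)) ∧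
      (ν^2+ν-1)*(p.2-(ν^3+2*ν^2-1)) ≤ (ν^2+2*ν)*(p.1-(ν^3+ν^2-ν-1)) ∧
      (ν^3+2*ν^2-1)*(p.1-(ν^3-ν-1)) ≤ ν^2*p.2} := by
  have hμ : (0:ℝ) ≤ ν - 2 := by linarith
  have P2 := pow_nonneg hμ 2
  have P3 := pow_nonneg hμ 3
  have P4 := pow_nonneg hμ 4
  have P5 := pow_nonneg hμ 5
  have P6 := pow_nonneg hμ 6
  have P7 := pow_nonneg hμ 7
  apply Set.Subset.antisymm
  · apply convexHull_min
    · intro v hv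
      simp only [Set.mem_insert_iff, Set.mem_singleton_iff] at hv
      rcases hv with h|h|h|h|h <;> subst h <;> refine ⟨?_, ?_, ?_, ?_, ?_⟩ <;>
        simp only [Set.mem_setOf_eq] <;> linarith [hμ, P2, P3, P4, P5, P6, P7]
    · intro p hp q hq a b ha hb hab
      simp only [Set.mem_setOf_eq] at hp hq ⊢
      obtain ⟨p1, p2, p3, p4, p5⟩ := hp
      obtain ⟨q1, q2, q3, q4, q5⟩ := hq
      have hb' : b = 1 - a := by linarith
      subst hb'
      have e1 : (a • p + (1-a) • q).1 = a * p.1 + (1-a) * q.1 := rfl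
      have e2 : (a • p + (1-a) • q).2 = a * p.2 + (1-a) * q.2 := rfl
      rw [e1, e2]
      have ha' : (0:ℝ) ≤ 1 - a := by linarith
      refine ⟨?_, ?_, ?_, ?_, ?_⟩
      · linarith [mul_le_mul_of_nonneg_left p1 ha, mul_le_mul_of_nonneg_left q1 ha']
      · linarith [mul_le_mul_of_nonneg_left p2 ha, mul_le_mul_of_nonneg_left q2 ha']
      · linarith [mul_le_mul_of_nonneg_left p3 ha, mul_le_mul_of_nonneg_left q3 ha']
      · linarith [mul_le_mul_of_nonneg_left p4 ha, mul_le_mul_of_nonneg_left q4 ha']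
      · linarith [mul_le_mul_of_nonneg_left p5 ha, mul_le_mul_of_nonneg_left q5 ha']
  · intro p hp
    simp only [Set.mem_setOf_eq] at hp
    obtain ⟨c1, c2, c3, c4, c5⟩ := hp
    by_cases hB : (ν^3+ν^2-ν-1)*p.2 - (ν^3+2*ν^2-1)*p.1 ≤ 0
    · have hmem := mem_tri (ν^3-ν-1, 0) (ν^3+ν^2-ν-1, ν^3+2*ν^2-1) p
        (by simp only; linarith [hμ, P2, P3, P4, P5, P6, P7])
        (by simp only; linarith [hB])
        (by simp only
            nlinarith [mul_nonneg (by linarith [hμ, P2, P3] : (0:ℝ) ≤ ν^3-ν-1) c1])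
        (by simp only; linarith [c5])
      refine convexHull_mono ?_ hmem
      intro x hx
      simp only [Set.mem_insert_iff, Set.mem_singleton_iff] at hx ⊢
      tauto
    · push_neg at hB
      by_cases hC : (ν^2+ν-2)*p.2 - (ν^2+2*ν-1)*p.1 ≤ 0
      · have hmem := mem_tri (ν^3+ν^2-ν-1, ν^3+2*ν^2-1) (ν^2+ν-2, ν^2+2*ν-1) p
          (by simp only; linarith [hμ, P2])
          (by simp only; linarith [hC])
          (by simp only; linarith [hB])
          (by simp only
              nlinarith [mul_nonneg (by linarith : (0:ℝ) ≤ ν-1)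
                (by linarith : (0:ℝ) ≤ (ν^2+2*ν)*(p.1-(ν^3+ν^2-ν-1))
                  - (ν^2+ν-1)*(p.2-(ν^3+2*ν^2-1)))])
        refine convexHull_mono ?_ hmem
        intro x hx
        simp only [Set.mem_insert_iff, Set.mem_singleton_iff] at hx ⊢
        tauto
      · push_neg at hC
        have hmem := mem_tri (ν^2+ν-2, ν^2+2*ν-1) (ν-1, ν) p
          (by simp only; linarith [hμ])
          (by simp only; linarith [c2])
          (by simp only; linarith [hC])
          (by simp only; linarith [c3])
        refine convexHull_mono ?_ hmem
        intro x hx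
        simp only [Set.mem_insert_iff, Set.mem_singleton_iff] at hx ⊢
        tauto

noncomputable def colS (n x : ℤ) : Finset ℤ := (Finset.Icc 0 (n^3+2*n^2-1)).filter (fun y =>
  0 ≤ y ∧ (n-1)*y ≤ n*x ∧
  (n^2-1)*(y-(n^2+2*n-1)) ≤ (n^2+n-1)*(x-(n^2+n-2)) ∧
  (n^2+n-1)*(y-(n^3+2*n^2-1)) ≤ (n^2+2*n)*(x-(n^3+n^2-n-1)) ∧
  (n^3+2*n^2-1)*(x-(n^3-n-1)) ≤ n^2*y)

noncomputable def latF (n : ℤ) : Finset (ℤ×ℤ) :=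
  ((Finset.Icc (0:ℤ) (n^3+n^2-n-1)) ×ˢ (Finset.Icc (0:ℤ) (n^3+2*n^2-1))).filter (fun z =>
  0 ≤ z.2 ∧ (n-1)*z.2 ≤ n*z.1 ∧
  (n^2-1)*(z.2-(n^2+2*n-1)) ≤ (n^2+n-1)*(z.1-(n^2+n-2)) ∧
  (n^2+n-1)*(z.2-(n^3+2*n^2-1)) ≤ (n^2+2*n)*(z.1-(n^3+n^2-n-1)) ∧
  (n^3+2*n^2-1)*(z.1-(n^3-n-1)) ≤ n^2*z.2)

lemma fib (n : ℤ) : ((latF n).card : ℤ)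
    = ∑ x ∈ Finset.Icc (0:ℤ) (n^3+n^2-n-1), ((colS n x).card : ℤ) := by
  have h : (latF n).card = ∑ x ∈ Finset.Icc (0:ℤ) (n^3+n^2-n-1),
      ((latF n).filter (fun z => z.1 = x)).card := by
    apply Finset.card_eq_sum_card_fiberwise
    intro z hz
    simp only [latF, Finset.mem_coe, Finset.mem_filter, Finset.mem_product] at hz
    exact hz.1.1
  rw [h]
  push_cast
  apply Finset.sum_congr rfl
  intro x hx
  congr 1
  apply Finset.card_nbij' (i := fun z => z.2) (j := fun y => (x, y))
  · intro z hz
    rw [Finset.mem_coe, Finset.mem_filter] at hz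
    obtain ⟨hz, hfst⟩ := hz
    simp only [latF, Finset.mem_filter, Finset.mem_product] at hz
    obtain ⟨⟨hz1, hz2⟩, hc⟩ := hz
    simp only [colS, Finset.mem_coe, Finset.mem_filter]
    rw [hfst] at hc
    exact ⟨hz2, hc⟩
  · intro y hy
    simp only [colS, Finset.mem_coe, Finset.mem_filter] at hy
    rw [Finset.mem_coe, Finset.mem_filter]
    constructor
    · simp only [latF, Finset.mem_filter, Finset.mem_product]
      exact ⟨⟨hx, hy.1⟩, hy.2⟩
    · rfl
  · intro z hz
    rw [Finset.mem_coe, Finset.mem_filter] at hz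
    show (x, z.2) = z
    rw [← hz.2]
  · intro y _
    rfl
lemma seg1 (n x : ℤ) (hn : 2 ≤ n) (hx1 : 0 ≤ x) (hx2 : x ≤ n-1) :
    colS n x = Finset.Icc 0 (n*x/(n-1)) := by
  have hμ : (0:ℤ) ≤ n - 2 := by omega
  have P2 := pow_nonneg hμ 2
  have P3 := pow_nonneg hμ 3
  have hb1 : (0:ℤ) < n - 1 := by omega
  have hB2 : (0:ℤ) < n^2 - 1 := by nlinarith
  have hb3 : (0:ℤ) < n^2 + n - 1 := by nlinarith
  have hsq : (0:ℤ) < n^2 := by positivity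
  ext y
  simp only [colS, Finset.mem_filter, Finset.mem_Icc]
  constructor
  · rintro ⟨⟨hy0, hyB⟩, c1, c2, c3, c4, c5⟩
    exact ⟨hy0, (Int.le_ediv_iff_mul_le hb1).mpr (by linarith)⟩
  · rintro ⟨hy0, hyU⟩
    have hy1 : y * (n-1) ≤ n * x := (Int.le_ediv_iff_mul_le hb1).mp hyU
    have hF1a : (n*x)*(n^2-1) ≤ ((n^2+n-1)*(x-(n^2+n-2)) + (n^2+2*n-1)*(n^2-1))*(n-1) := by
      linarith [mul_nonneg (by omega : (0:ℤ) ≤ n-1) (by omega : (0:ℤ) ≤ (n-1) - x)]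
    have hF1b : (n*x)*(n^2+n-1)
        ≤ ((n^2+2*n)*(x-(n^3+n^2-n-1)) + (n^3+2*n^2-1)*(n^2+n-1))*(n-1) := by
      linarith [mul_nonneg (by omega : (0:ℤ) ≤ n) (by omega : (0:ℤ) ≤ (n-1) - x), hμ]
    have c3' : y*(n^2-1) ≤ (n^2+n-1)*(x-(n^2+n-2)) + (n^2+2*n-1)*(n^2-1) := by
      have h1 : y*(n-1)*(n^2-1) ≤ (n*x)*(n^2-1) :=
        mul_le_mul_of_nonneg_right hy1 (le_of_lt hB2)
      exact le_of_mul_le_mul_right (by linarith) hb1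
    have c4' : y*(n^2+n-1) ≤ (n^2+2*n)*(x-(n^3+n^2-n-1)) + (n^3+2*n^2-1)*(n^2+n-1) := by
      have h1 : y*(n-1)*(n^2+n-1) ≤ (n*x)*(n^2+n-1) :=
        mul_le_mul_of_nonneg_right hy1 (le_of_lt hb3)
      exact le_of_mul_le_mul_right (by linarith) hb1
    have c5' : (n^3+2*n^2-1)*(x-(n^3-n-1)) ≤ 0 :=
      mul_nonpos_of_nonneg_of_nonpos (by linarith [hμ, P2, P3]) (by linarith [hμ, P2, P3])
    have hq : (n^2+2*n)*(x-(n^3+n^2-n-1)) ≤ 0 :=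
      mul_nonpos_of_nonneg_of_nonpos (by linarith [hμ, P2]) (by linarith [hμ, P2, P3])
    have hyB2 : y ≤ n^3+2*n^2-1 := by
      have h2 : y*(n^2+n-1) ≤ (n^3+2*n^2-1)*(n^2+n-1) := by linarith
      exact le_of_mul_le_mul_right h2 hb3
    exact ⟨⟨hy0, hyB2⟩, hy0, by linarith, by linarith, by linarith,
      by linarith [mul_nonneg (le_of_lt hsq) hy0]⟩

lemma seg2 (n x : ℤ) (hn : 2 ≤ n) (hx1 : n ≤ x) (hx2 : x ≤ n^2+n-2) :
    colS n x
      = Finset.Icc 0 (((n^2+n-1)*(x-(n^2+n-2)) + (n^2+2*n-1)*(n^2-1))/(n^2-1)) := by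
  have hμ : (0:ℤ) ≤ n - 2 := by omega
  have P2 := pow_nonneg hμ 2
  have P3 := pow_nonneg hμ 3
  have hb1 : (0:ℤ) < n - 1 := by omega
  have hB2 : (0:ℤ) < n^2 - 1 := by nlinarith
  have hb3 : (0:ℤ) < n^2 + n - 1 := by nlinarith
  have hsq : (0:ℤ) < n^2 := by positivity
  have hxC : x ≤ n^3 - n - 1 := by linarith [hμ, P2, P3]
  ext y
  simp only [colS, Finset.mem_filter, Finset.mem_Icc]
  constructor
  · rintro ⟨⟨hy0, hyB⟩, c1, c2, c3, c4, c5⟩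
    exact ⟨hy0, (Int.le_ediv_iff_mul_le hB2).mpr (by linarith)⟩
  · rintro ⟨hy0, hyU⟩
    have hy2 : y*(n^2-1) ≤ (n^2+n-1)*(x-(n^2+n-2)) + (n^2+2*n-1)*(n^2-1) :=
      (Int.le_ediv_iff_mul_le hB2).mp hyU
    have hF2a : ((n^2+n-1)*(x-(n^2+n-2)) + (n^2+2*n-1)*(n^2-1))*(n-1) ≤ (n*x)*(n^2-1) := by
      linarith [mul_nonneg (by omega : (0:ℤ) ≤ n-1) (by omega : (0:ℤ) ≤ x - (n-1))]
    have c2' : (n-1)*y ≤ n*x := by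
      have h1 := mul_le_mul_of_nonneg_right hy2 (by omega : (0:ℤ) ≤ n-1)
      exact le_of_mul_le_mul_right (by linarith) hB2
    -- identity: num2*b3 - num3*B2 = x - Cx
    have c4' : y*(n^2+n-1) ≤ (n^2+2*n)*(x-(n^3+n^2-n-1)) + (n^3+2*n^2-1)*(n^2+n-1) := by
      have h1 := mul_le_mul_of_nonneg_right hy2 (le_of_lt hb3)
      have hid : ((n^2+n-1)*(x-(n^2+n-2)) + (n^2+2*n-1)*(n^2-1))*(n^2+n-1)
          - ((n^2+2*n)*(x-(n^3+n^2-n-1)) + (n^3+2*n^2-1)*(n^2+n-1))*(n^2-1)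
          = x - (n^2+n-2) := by ring
      exact le_of_mul_le_mul_right (by linarith) hB2
    have c5' : (n^3+2*n^2-1)*(x-(n^3-n-1)) ≤ 0 :=
      mul_nonpos_of_nonneg_of_nonpos (by linarith [hμ, P2, P3]) (by linarith)
    have hq : (n^2+2*n)*(x-(n^3+n^2-n-1)) ≤ 0 :=
      mul_nonpos_of_nonneg_of_nonpos (by linarith [hμ, P2]) (by linarith [hμ, P2, P3])
    have hyB2 : y ≤ n^3+2*n^2-1 := by
      have h2 : y*(n^2+n-1) ≤ (n^3+2*n^2-1)*(n^2+n-1) := by linarith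
      exact le_of_mul_le_mul_right h2 hb3
    exact ⟨⟨hy0, hyB2⟩, hy0, c2', by linarith, by linarith,
      by linarith [mul_nonneg (le_of_lt hsq) hy0]⟩

lemma seg3 (n x : ℤ) (hn : 2 ≤ n) (hx1 : n^2+n-1 ≤ x) (hx2 : x ≤ n^3-n-1) :
    colS n x
      = Finset.Icc 0 (((n^2+2*n)*(x-(n^3+n^2-n-1)) + (n^3+2*n^2-1)*(n^2+n-1))/(n^2+n-1)) := by
  have hμ : (0:ℤ) ≤ n - 2 := by omega
  have P2 := pow_nonneg hμ 2
  have P3 := pow_nonneg hμ 3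
  have hb1 : (0:ℤ) < n - 1 := by omega
  have hB2 : (0:ℤ) < n^2 - 1 := by nlinarith
  have hb3 : (0:ℤ) < n^2 + n - 1 := by nlinarith
  have hsq : (0:ℤ) < n^2 := by positivity
  ext y
  simp only [colS, Finset.mem_filter, Finset.mem_Icc]
  constructor
  · rintro ⟨⟨hy0, hyB⟩, c1, c2, c3, c4, c5⟩
    exact ⟨hy0, (Int.le_ediv_iff_mul_le hb3).mpr (by linarith)⟩
  · rintro ⟨hy0, hyU⟩
    have hy3 : y*(n^2+n-1) ≤ (n^2+2*n)*(x-(n^3+n^2-n-1)) + (n^3+2*n^2-1)*(n^2+n-1) :=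
      (Int.le_ediv_iff_mul_le hb3).mp hyU
    have hF3a : ((n^2+2*n)*(x-(n^3+n^2-n-1)) + (n^3+2*n^2-1)*(n^2+n-1))*(n-1)
        ≤ (n*x)*(n^2+n-1) := by
      linarith [mul_nonneg (by omega : (0:ℤ) ≤ n) (by linarith : (0:ℤ) ≤ x - (n^2+n-2)),
        hμ, P2, P3]
    have c2' : (n-1)*y ≤ n*x := by
      have h1 := mul_le_mul_of_nonneg_right hy3 (by omega : (0:ℤ) ≤ n-1)
      exact le_of_mul_le_mul_right (by linarith) hb3
    have c3' : y*(n^2-1) ≤ (n^2+n-1)*(x-(n^2+n-2)) + (n^2+2*n-1)*(n^2-1) := by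
      have h1 := mul_le_mul_of_nonneg_right hy3 (le_of_lt hB2)
      have hid : ((n^2+n-1)*(x-(n^2+n-2)) + (n^2+2*n-1)*(n^2-1))*(n^2+n-1)
          - ((n^2+2*n)*(x-(n^3+n^2-n-1)) + (n^3+2*n^2-1)*(n^2+n-1))*(n^2-1)
          = x - (n^2+n-2) := by ring
      have h2 : (y*(n^2-1))*(n^2+n-1)
          ≤ ((n^2+n-1)*(x-(n^2+n-2)) + (n^2+2*n-1)*(n^2-1))*(n^2+n-1) := by
        linarith
      exact le_of_mul_le_mul_right h2 hb3
    have c5' : (n^3+2*n^2-1)*(x-(n^3-n-1)) ≤ 0 :=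
      mul_nonpos_of_nonneg_of_nonpos (by linarith [hμ, P2, P3]) (by linarith)
    have hq : (n^2+2*n)*(x-(n^3+n^2-n-1)) ≤ 0 :=
      mul_nonpos_of_nonneg_of_nonpos (by linarith [hμ, P2]) (by linarith [hμ, P2, P3])
    have hyB2 : y ≤ n^3+2*n^2-1 := by
      have h2 : y*(n^2+n-1) ≤ (n^3+2*n^2-1)*(n^2+n-1) := by linarith
      exact le_of_mul_le_mul_right h2 hb3
    exact ⟨⟨hy0, hyB2⟩, hy0, c2', by linarith, by linarith,
      by linarith [mul_nonneg (le_of_lt hsq) hy0]⟩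

lemma seg4 (n x : ℤ) (hn : 2 ≤ n) (hx1 : n^3-n ≤ x) (hx2 : x ≤ n^3+n^2-n-1) :
    colS n x
      = Finset.Icc (((n^3+2*n^2-1)*(x-(n^3-n-1)) - 1)/n^2 + 1)
        (((n^2+2*n)*(x-(n^3+n^2-n-1)) + (n^3+2*n^2-1)*(n^2+n-1))/(n^2+n-1)) := by
  have hμ : (0:ℤ) ≤ n - 2 := by omega
  have P2 := pow_nonneg hμ 2
  have P3 := pow_nonneg hμ 3
  have hb1 : (0:ℤ) < n - 1 := by omega
  have hB2 : (0:ℤ) < n^2 - 1 := by nlinarith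
  have hb3 : (0:ℤ) < n^2 + n - 1 := by nlinarith
  have hsq : (0:ℤ) < n^2 := by positivity
  have hBy : (0:ℤ) ≤ n^3+2*n^2-1 := by linarith [hμ, P2, P3]
  ext y
  simp only [colS, Finset.mem_filter, Finset.mem_Icc]
  constructor
  · rintro ⟨⟨hy0, hyB⟩, c1, c2, c3, c4, c5⟩
    exact ⟨(ceil_le_iff _ _ _ hsq).mpr (by linarith),
      (Int.le_ediv_iff_mul_le hb3).mpr (by linarith)⟩
  · rintro ⟨hyL, hyU⟩
    have hc5 : (n^3+2*n^2-1)*(x-(n^3-n-1)) ≤ n^2*y := (ceil_le_iff _ _ _ hsq).mp hyL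
    have hy0 : 0 ≤ y := by
      have h1 : (n^3+2*n^2-1)*1 ≤ (n^3+2*n^2-1)*(x-(n^3-n-1)) :=
        mul_le_mul_of_nonneg_left (by omega) hBy
      have h2 : 0 ≤ n^2*y := by linarith
      by_contra hneg
      push_neg at hneg
      have : n^2*y ≤ n^2*(-1) := mul_le_mul_of_nonneg_left (by omega) (le_of_lt hsq)
      linarith
    have hy3 : y*(n^2+n-1) ≤ (n^2+2*n)*(x-(n^3+n^2-n-1)) + (n^3+2*n^2-1)*(n^2+n-1) :=
      (Int.le_ediv_iff_mul_le hb3).mp hyU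
    have hF3a : ((n^2+2*n)*(x-(n^3+n^2-n-1)) + (n^3+2*n^2-1)*(n^2+n-1))*(n-1)
        ≤ (n*x)*(n^2+n-1) := by
      linarith [mul_nonneg (by omega : (0:ℤ) ≤ n) (by linarith [hμ, P2, P3] :
        (0:ℤ) ≤ x - (n^2+n-2)), hμ, P2, P3]
    have c2' : (n-1)*y ≤ n*x := by
      have h1 := mul_le_mul_of_nonneg_right hy3 (by omega : (0:ℤ) ≤ n-1)
      exact le_of_mul_le_mul_right (by linarith) hb3
    have c3' : y*(n^2-1) ≤ (n^2+n-1)*(x-(n^2+n-2)) + (n^2+2*n-1)*(n^2-1) := by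
      have h1 := mul_le_mul_of_nonneg_right hy3 (le_of_lt hB2)
      have hid : ((n^2+n-1)*(x-(n^2+n-2)) + (n^2+2*n-1)*(n^2-1))*(n^2+n-1)
          - ((n^2+2*n)*(x-(n^3+n^2-n-1)) + (n^3+2*n^2-1)*(n^2+n-1))*(n^2-1)
          = x - (n^2+n-2) := by ring
      have h2 : (y*(n^2-1))*(n^2+n-1)
          ≤ ((n^2+n-1)*(x-(n^2+n-2)) + (n^2+2*n-1)*(n^2-1))*(n^2+n-1) := by
        linarith [hμ, P2, P3]
      exact le_of_mul_le_mul_right h2 hb3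
    have hq : (n^2+2*n)*(x-(n^3+n^2-n-1)) ≤ 0 :=
      mul_nonpos_of_nonneg_of_nonpos (by linarith [hμ, P2]) (by linarith)
    have hyB2 : y ≤ n^3+2*n^2-1 := by
      have h2 : y*(n^2+n-1) ≤ (n^3+2*n^2-1)*(n^2+n-1) := by linarith
      exact le_of_mul_le_mul_right h2 hb3
    exact ⟨⟨hy0, hyB2⟩, hy0, c2', by linarith, by linarith, by linarith⟩
lemma cardseg1 (n x : ℤ) (hn : 2 ≤ n) (hx1 : 0 ≤ x) (hx2 : x ≤ n-1) :
    ((colS n x).card : ℤ) = n*x/(n-1) + 1 := by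
  have hnn : (0:ℤ) ≤ n*x/(n-1) :=
    Int.ediv_nonneg (mul_nonneg (by omega) hx1) (by omega)
  rw [seg1 n x hn hx1 hx2, card_icc 0 _ (by omega)]
  ring

lemma cardseg2 (n x : ℤ) (hn : 2 ≤ n) (hx1 : n ≤ x) (hx2 : x ≤ n^2+n-2) :
    ((colS n x).card : ℤ)
      = ((n^2+n-1)*(x-(n^2+n-2)) + (n^2+2*n-1)*(n^2-1))/(n^2-1) + 1 := by
  have hμ : (0:ℤ) ≤ n - 2 := by omega
  have P2 := pow_nonneg hμ 2
  have P3 := pow_nonneg hμ 3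
  have hnum : (0:ℤ) ≤ (n^2+n-1)*(x-(n^2+n-2)) + (n^2+2*n-1)*(n^2-1) := by
    linarith [mul_nonneg (by linarith [P2] : (0:ℤ) ≤ n^2+n-1) (by omega : (0:ℤ) ≤ x-(n-1))]
  have hnn : (0:ℤ) ≤ ((n^2+n-1)*(x-(n^2+n-2)) + (n^2+2*n-1)*(n^2-1))/(n^2-1) :=
    Int.ediv_nonneg hnum (by nlinarith)
  rw [seg2 n x hn hx1 hx2, card_icc 0 _ (by omega)]
  ring

lemma cardseg3 (n x : ℤ) (hn : 2 ≤ n) (hx1 : n^2+n-1 ≤ x) (hx2 : x ≤ n^3-n-1) :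
    ((colS n x).card : ℤ)
      = ((n^2+2*n)*(x-(n^3+n^2-n-1)) + (n^3+2*n^2-1)*(n^2+n-1))/(n^2+n-1) + 1 := by
  have hμ : (0:ℤ) ≤ n - 2 := by omega
  have P2 := pow_nonneg hμ 2
  have P3 := pow_nonneg hμ 3
  have P4 := pow_nonneg hμ 4
  have hnum : (0:ℤ) ≤ (n^2+2*n)*(x-(n^3+n^2-n-1)) + (n^3+2*n^2-1)*(n^2+n-1) := by
    linarith [mul_nonneg (by linarith [P2] : (0:ℤ) ≤ n^2+2*n)
      (by linarith : (0:ℤ) ≤ x-(n^2+n-2)), hμ, P2, P3, P4]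
  have hnn : (0:ℤ) ≤ ((n^2+2*n)*(x-(n^3+n^2-n-1)) + (n^3+2*n^2-1)*(n^2+n-1))/(n^2+n-1) :=
    Int.ediv_nonneg hnum (by nlinarith)
  rw [seg3 n x hn hx1 hx2, card_icc 0 _ (by omega)]
  ring

lemma cardseg4 (n x : ℤ) (hn : 2 ≤ n) (hx1 : n^3-n ≤ x) (hx2 : x ≤ n^3+n^2-n-1) :
    ((colS n x).card : ℤ)
      = (((n^2+2*n)*(x-(n^3+n^2-n-1)) + (n^3+2*n^2-1)*(n^2+n-1))/(n^2+n-1) + 1)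
        - (((n^3+2*n^2-1)*(x-(n^3-n-1)) - 1)/n^2 + 1) := by
  have hμ : (0:ℤ) ≤ n - 2 := by omega
  have P2 := pow_nonneg hμ 2
  have P3 := pow_nonneg hμ 3
  have P4 := pow_nonneg hμ 4
  have P5 := pow_nonneg hμ 5
  have hb3 : (0:ℤ) < n^2 + n - 1 := by nlinarith
  have hsq : (0:ℤ) < n^2 := by positivity
  have hle : (((n^3+2*n^2-1)*(x-(n^3-n-1)) - 1)/n^2 + 1)
      ≤ ((n^2+2*n)*(x-(n^3+n^2-n-1)) + (n^3+2*n^2-1)*(n^2+n-1))/(n^2+n-1) := by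
    rcases eq_or_lt_of_le hx2 with heq | hlt
    · subst heq
      have e1 : ((n^3+2*n^2-1)*((n^3+n^2-n-1)-(n^3-n-1)) - 1)/n^2 = n^3+2*n^2-2 := by
        rw [show ((n^3+2*n^2-1)*((n^3+n^2-n-1)-(n^3-n-1)) - 1)
            = (n^2-1) + (n^3+2*n^2-2)*n^2 by ring,
          Int.add_mul_ediv_right _ _ (by positivity : (n:ℤ)^2 ≠ 0),
          Int.ediv_eq_zero_of_lt (by nlinarith) (by nlinarith)]
        ring
      have e2 : ((n^2+2*n)*((n^3+n^2-n-1)-(n^3+n^2-n-1)) + (n^3+2*n^2-1)*(n^2+n-1))/(n^2+n-1)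
          = n^3+2*n^2-1 := by
        rw [show ((n^2+2*n)*((n^3+n^2-n-1)-(n^3+n^2-n-1)) + (n^3+2*n^2-1)*(n^2+n-1))
            = (n^3+2*n^2-1)*(n^2+n-1) by ring]
        exact Int.mul_ediv_cancel _ (by omega)
      rw [e1, e2]
      omega
    · have hF4b : ((n^3+2*n^2-1)*(x-(n^3-n-1)) - 1)*(n^2+n-1)
          ≤ (((n^2+2*n)*(x-(n^3+n^2-n-1)) + (n^3+2*n^2-1)*(n^2+n-1)) - (n^2+n-1))*n^2 := by
        linarith [mul_nonneg (by linarith [hμ, P2, P3, P4, P5] :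
            (0:ℤ) ≤ 43+119*(n-2)+119*(n-2)^2+55*(n-2)^3+12*(n-2)^4+(n-2)^5)
          (by omega : (0:ℤ) ≤ (n^3+n^2-n-1-1) - x), hμ, P2, P3, P4, P5]
      have hcross := ediv_cross _ _ _ _ hsq hb3 hF4b
      have e3 : (((n^2+2*n)*(x-(n^3+n^2-n-1)) + (n^3+2*n^2-1)*(n^2+n-1)) - (n^2+n-1))/(n^2+n-1)
          = ((n^2+2*n)*(x-(n^3+n^2-n-1)) + (n^3+2*n^2-1)*(n^2+n-1))/(n^2+n-1) + (-1) := by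
        rw [show (((n^2+2*n)*(x-(n^3+n^2-n-1)) + (n^3+2*n^2-1)*(n^2+n-1)) - (n^2+n-1))
            = ((n^2+2*n)*(x-(n^3+n^2-n-1)) + (n^3+2*n^2-1)*(n^2+n-1)) + (-1)*(n^2+n-1)
            by ring,
          Int.add_mul_ediv_right _ _ (by omega : (n:ℤ)^2+n-1 ≠ 0)]
      rw [e3] at hcross
      omega
  rw [seg4 n x hn hx1 hx2, card_icc _ _ (by omega)]
lemma E1 (n : ℤ) (hn : 2 ≤ n) :
    2 * ∑ x ∈ Finset.Icc (0:ℤ) (n-1), (n*x/(n-1) + 1) = n^2 + n + 2 := by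
  have hcong : ∀ x ∈ Finset.Icc (0:ℤ) (n-1), n*x/(n-1) + 1 = x/(n-1) + x + 1 := by
    intro x hx
    rw [show n*x = x + x*(n-1) by ring, Int.add_mul_ediv_right _ _ (by omega : (n:ℤ)-1 ≠ 0)]
  rw [Finset.sum_congr rfl hcong, Finset.sum_add_distrib, Finset.sum_add_distrib,
    Finset.sum_const, nsmul_eq_mul]
  have hA : ∑ x ∈ Finset.Icc (0:ℤ) (n-1), x/(n-1) = 1 := by
    have hz : ∑ x ∈ Finset.Icc (0:ℤ) (n-2), x/(n-1) = 0 := by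
      apply Finset.sum_eq_zero
      intro x hx
      simp only [Finset.mem_Icc] at hx
      exact Int.ediv_eq_zero_of_lt hx.1 (by omega)
    rw [sum_split _ 0 (n-2) (n-1) (by omega) (by omega), show (n:ℤ)-2+1 = n-1 by ring,
      Finset.Icc_self, Finset.sum_singleton, Int.ediv_self (by omega : (n:ℤ)-1 ≠ 0), hz]
    omega
  have hB := gauss2 (n-1) (by omega)
  have hc : ((Finset.Icc (0:ℤ) (n-1)).card : ℤ) = n := by rw [card_icc 0 (n-1) (by omega)]; ring
  rw [hA, hc]
  linarith

lemma E2 (n : ℤ) (hn : 2 ≤ n) :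
    2 * ∑ x ∈ Finset.Icc (n:ℤ) (n^2+n-2),
        (((n^2+n-1)*(x-(n^2+n-2)) + (n^2+2*n-1)*(n^2-1))/(n^2-1) + 1)
      = (n-1)*(n^2-2) + 2*n + (n^2-1)*n^2 + 2*(n+1)*(n^2-1) := by
  have hμ : (0:ℤ) ≤ n - 2 := by omega
  have P2 := pow_nonneg hμ 2
  have hB2 : (0:ℤ) < n^2-1 := by nlinarith
  have hsh := sum_shift (fun x => (((n^2+n-1)*(x-(n^2+n-2)) + (n^2+2*n-1)*(n^2-1))/(n^2-1) + 1))
    (n-1) 1 (n^2-1)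
  rw [show (n:ℤ)-1+1 = n by ring, show (n:ℤ)-1+(n^2-1) = n^2+n-2 by ring] at hsh
  rw [hsh]
  have hcong : ∀ t ∈ Finset.Icc (1:ℤ) (n^2-1),
      ((n^2+n-1)*((n-1+t)-(n^2+n-2)) + (n^2+2*n-1)*(n^2-1))/(n^2-1) + 1
        = (n*t)/(n^2-1) + (t + (n+1)) := by
    intro t ht
    rw [show (n^2+n-1)*((n-1+t)-(n^2+n-2)) + (n^2+2*n-1)*(n^2-1)
        = n*t + (t+n)*(n^2-1) by ring,
      Int.add_mul_ediv_right _ _ (by omega : (n:ℤ)^2-1 ≠ 0)]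
    ring
  rw [Finset.sum_congr rfl hcong, Finset.sum_add_distrib, Finset.sum_add_distrib,
    Finset.sum_const, nsmul_eq_mul]
  have hA : ∑ t ∈ Finset.Icc (1:ℤ) (n^2-1), (n*t)/(n^2-1)
      = (∑ t ∈ Finset.Icc (1:ℤ) (n^2-2), (n*t)/(n^2-1)) + n := by
    rw [sum_split _ 1 (n^2-2) (n^2-1) (by omega) (by omega), show (n:ℤ)^2-2+1 = n^2-1 by ring,
      Finset.Icc_self, Finset.sum_singleton, show n*((n:ℤ)^2-1) = n*(n^2-1) by ring,
      Int.mul_ediv_cancel _ (by omega : (n:ℤ)^2-1 ≠ 0)]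
  have hP : 2 * ∑ t ∈ Finset.Icc (1:ℤ) ((n^2-1)-1), n*t/(n^2-1) = (n-1)*((n^2-1)-1) :=
    period_sum n (n^2-1) hB2 ⟨-1, n, by ring⟩
  rw [show (n:ℤ)^2-1-1 = n^2-2 by ring] at hP
  have hT : ∑ t ∈ Finset.Icc (1:ℤ) (n^2-1), t = ∑ t ∈ Finset.Icc (0:ℤ) (n^2-1), t := by
    rw [sum_split _ 0 0 (n^2-1) (by omega) (by nlinarith), Finset.Icc_self,
      Finset.sum_singleton, show (0:ℤ)+1 = 1 by ring, zero_add]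
  have hG := gauss2 (n^2-1) (by nlinarith)
  have hc : ((Finset.Icc (1:ℤ) (n^2-1)).card : ℤ) = n^2-1 := by
    rw [card_icc 1 (n^2-1) (by nlinarith)]; ring
  rw [hA, hT, hc]
  linarith

lemma E3 (n : ℤ) (hn : 2 ≤ n) :
    2 * ∑ x ∈ Finset.Icc (n^2+n-1 : ℤ) (n^3+n^2-n-1),
        (((n^2+2*n)*(x-(n^3+n^2-n-1)) + (n^3+2*n^2-1)*(n^2+n-1))/(n^2+n-1) + 1)
      = (n-1)*n*((n^2+n-1)-1) + (n+1)*(n^2+n-1)*(n-1)*(n-2) + 2*((n+1)*(n-1))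
        + ((n-1)*(n^2+n-1))*((n-1)*(n^2+n-1)+1) + 2*(n^2+2*n)*((n-1)*(n^2+n-1)) := by
  have hμ : (0:ℤ) ≤ n - 2 := by omega
  have P2 := pow_nonneg hμ 2
  have P3 := pow_nonneg hμ 3
  have hb3 : (0:ℤ) < n^2+n-1 := by nlinarith
  have hL : (0:ℤ) ≤ (n-1)*(n^2+n-1) := by nlinarith
  have hsh := sum_shift (fun x =>
      (((n^2+2*n)*(x-(n^3+n^2-n-1)) + (n^3+2*n^2-1)*(n^2+n-1))/(n^2+n-1) + 1))
    (n^2+n-2) 1 ((n-1)*(n^2+n-1))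
  rw [show (n:ℤ)^2+n-2+1 = n^2+n-1 by ring,
    show (n:ℤ)^2+n-2+((n-1)*(n^2+n-1)) = n^3+n^2-n-1 by ring] at hsh
  rw [hsh]
  have hcong : ∀ t ∈ Finset.Icc (1:ℤ) ((n-1)*(n^2+n-1)),
      ((n^2+2*n)*((n^2+n-2+t)-(n^3+n^2-n-1)) + (n^3+2*n^2-1)*(n^2+n-1))/(n^2+n-1) + 1
        = ((n+1)*t)/(n^2+n-1) + (t + (n^2+2*n)) := by
    intro t ht
    rw [show (n^2+2*n)*((n^2+n-2+t)-(n^3+n^2-n-1)) + (n^3+2*n^2-1)*(n^2+n-1)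
        = (n+1)*t + (t+(n^2+2*n-1))*(n^2+n-1) by ring,
      Int.add_mul_ediv_right _ _ (by omega : (n:ℤ)^2+n-1 ≠ 0)]
    ring
  rw [Finset.sum_congr rfl hcong, Finset.sum_add_distrib, Finset.sum_add_distrib,
    Finset.sum_const, nsmul_eq_mul]
  have hzero : ∑ t ∈ Finset.Icc (1:ℤ) ((n-1)*(n^2+n-1)), ((n+1)*t)/(n^2+n-1)
      = ∑ t ∈ Finset.Icc (0:ℤ) ((n-1)*(n^2+n-1)), ((n+1)*t)/(n^2+n-1) := by
    rw [sum_split _ 0 0 ((n-1)*(n^2+n-1)) (by omega) hL, Finset.Icc_self,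
      Finset.sum_singleton, show (0:ℤ)+1 = 1 by ring, mul_zero,
      Int.zero_ediv, zero_add]
  have htop : ∑ t ∈ Finset.Icc (0:ℤ) ((n-1)*(n^2+n-1)), ((n+1)*t)/(n^2+n-1)
      = (∑ t ∈ Finset.Icc (0:ℤ) ((n-1)*(n^2+n-1)-1), ((n+1)*t)/(n^2+n-1)) + (n+1)*(n-1) := by
    rw [sum_split _ 0 ((n-1)*(n^2+n-1)-1) ((n-1)*(n^2+n-1)) (by nlinarith) (by omega),
      show (n-1)*((n:ℤ)^2+n-1)-1+1 = (n-1)*(n^2+n-1) by ring, Finset.Icc_self,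
      Finset.sum_singleton,
      show (n+1)*((n-1)*((n:ℤ)^2+n-1)) = ((n+1)*(n-1))*(n^2+n-1) by ring,
      Int.mul_ediv_cancel _ (by omega : (n:ℤ)^2+n-1 ≠ 0)]
  have hM := multi_sum (n+1) (n^2+n-1) hb3 ⟨-1, n, by ring⟩ (n-1) (by omega)
  have hG := gauss2 ((n-1)*(n^2+n-1)) hL
  have hT : ∑ t ∈ Finset.Icc (1:ℤ) ((n-1)*(n^2+n-1)), t
      = ∑ t ∈ Finset.Icc (0:ℤ) ((n-1)*(n^2+n-1)), t := by
    rw [sum_split _ 0 0 ((n-1)*(n^2+n-1)) (by omega) hL, Finset.Icc_self,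
      Finset.sum_singleton, show (0:ℤ)+1 = 1 by ring, zero_add]
  have hc : ((Finset.Icc (1:ℤ) ((n-1)*(n^2+n-1))).card : ℤ) = (n-1)*(n^2+n-1) := by
    rw [card_icc 1 ((n-1)*(n^2+n-1)) (by nlinarith)]; ring
  rw [hzero, htop, hT, hc]
  linarith

lemma E4 (n : ℤ) (hn : 2 ≤ n) :
    2 * ∑ x ∈ Finset.Icc (n^3-n : ℤ) (n^3+n^2-n-1),
        (((n^3+2*n^2-1)*(x-(n^3-n-1)) - 1)/n^2 + 1)
      = ((n^3+2*n^2-1)-1)*(n^2-1) + 2*(n^2-1) + 2*(n^3+2*n^2-1) := by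
  have hμ : (0:ℤ) ≤ n - 2 := by omega
  have P2 := pow_nonneg hμ 2
  have P3 := pow_nonneg hμ 3
  have hsq : (0:ℤ) < n^2 := by positivity
  have hsh := sum_shift (fun x => ((n^3+2*n^2-1)*(x-(n^3-n-1)) - 1)/n^2 + 1)
    (n^3-n-1) 1 (n^2)
  rw [show (n:ℤ)^3-n-1+1 = n^3-n by ring,
    show (n:ℤ)^3-n-1+n^2 = n^3+n^2-n-1 by ring] at hsh
  rw [hsh]
  have hcong : ∀ s ∈ Finset.Icc (1:ℤ) (n^2),
      ((n^3+2*n^2-1)*((n^3-n-1+s)-(n^3-n-1)) - 1)/n^2 + 1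
        = ((n^3+2*n^2-1)*s - 1)/n^2 + 1 := by
    intro s hs
    rw [show ((n:ℤ)^3-n-1+s)-(n^3-n-1) = s by ring]
    
  rw [Finset.sum_congr rfl hcong,
    sum_split _ 1 (n^2-1) (n^2) (by nlinarith) (by nlinarith),
    show (n:ℤ)^2-1+1 = n^2 by ring, Finset.Icc_self, Finset.sum_singleton]
  have htop : ((n^3+2*n^2-1)*(n^2) - 1)/n^2 + 1 = n^3+2*n^2-1 := by
    rw [show (n^3+2*n^2-1)*((n:ℤ)^2) - 1 = (n^2-1) + (n^3+2*n^2-2)*n^2 by ring,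
      Int.add_mul_ediv_right _ _ (by positivity : (n:ℤ)^2 ≠ 0),
      Int.ediv_eq_zero_of_lt (by nlinarith) (by nlinarith)]
    ring
  have hcong2 : ∀ s ∈ Finset.Icc (1:ℤ) (n^2-1),
      ((n^3+2*n^2-1)*s - 1)/n^2 + 1 = ((n^3+2*n^2-1)*s)/n^2 + 1 := by
    intro s hs
    simp only [Finset.mem_Icc] at hs
    rw [ediv_pred _ _ hsq
      (not_dvd_mul (n^3+2*n^2-1) (n^2) s ⟨n+2, -1, by ring⟩ (by omega) (by omega))]
  rw [Finset.sum_congr rfl hcong2, Finset.sum_add_distrib, Finset.sum_const, nsmul_eq_mul]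
  have hP : 2 * ∑ s ∈ Finset.Icc (1:ℤ) (n^2-1), (n^3+2*n^2-1)*s/n^2
      = ((n^3+2*n^2-1)-1)*(n^2-1) := period_sum (n^3+2*n^2-1) (n^2) hsq ⟨n+2, -1, by ring⟩
  have hc : ((Finset.Icc (1:ℤ) (n^2-1)).card : ℤ) = n^2-1 := by
    rw [card_icc 1 (n^2-1) (by nlinarith)]; ring
  rw [htop, hc]
  linarith
lemma count_eq (n : ℤ) (hn : 2 ≤ n) :
    2 * ((latF n).card : ℤ)
      = (n+2)*(n^2-1)*n^3 - (n+2)*n^2 + 2*n + (n^2-1) + 3 := by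
  have hμ : (0:ℤ) ≤ n - 2 := by omega
  have P2 := pow_nonneg hμ 2
  have P3 := pow_nonneg hμ 3
  rw [fib]
  rw [sum_split (fun x => ((colS n x).card : ℤ)) 0 (n-1) (n^3+n^2-n-1) (by omega)
      (by nlinarith), show (n:ℤ)-1+1 = n by ring,
    sum_split (fun x => ((colS n x).card : ℤ)) n (n^2+n-2) (n^3+n^2-n-1) (by nlinarith)
      (by nlinarith), show (n:ℤ)^2+n-2+1 = n^2+n-1 by ring]
  have h1 : ∑ x ∈ Finset.Icc (0:ℤ) (n-1), ((colS n x).card : ℤ)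
      = ∑ x ∈ Finset.Icc (0:ℤ) (n-1), (n*x/(n-1) + 1) := by
    apply Finset.sum_congr rfl
    intro x hx
    simp only [Finset.mem_Icc] at hx
    exact cardseg1 n x hn hx.1 hx.2
  have h2 : ∑ x ∈ Finset.Icc (n:ℤ) (n^2+n-2), ((colS n x).card : ℤ)
      = ∑ x ∈ Finset.Icc (n:ℤ) (n^2+n-2),
          (((n^2+n-1)*(x-(n^2+n-2)) + (n^2+2*n-1)*(n^2-1))/(n^2-1) + 1) := by
    apply Finset.sum_congr rfl
    intro x hx
    simp only [Finset.mem_Icc] at hx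
    exact cardseg2 n x hn hx.1 hx.2
  have h34 : ∑ x ∈ Finset.Icc (n^2+n-1 : ℤ) (n^3+n^2-n-1), ((colS n x).card : ℤ)
      = (∑ x ∈ Finset.Icc (n^2+n-1 : ℤ) (n^3+n^2-n-1),
          (((n^2+2*n)*(x-(n^3+n^2-n-1)) + (n^3+2*n^2-1)*(n^2+n-1))/(n^2+n-1) + 1))
        - ∑ x ∈ Finset.Icc (n^3-n : ℤ) (n^3+n^2-n-1),
            (((n^3+2*n^2-1)*(x-(n^3-n-1)) - 1)/n^2 + 1) := by
    rw [sum_split (fun x => ((colS n x).card : ℤ)) (n^2+n-1) (n^3-n-1) (n^3+n^2-n-1)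
        (by nlinarith) (by nlinarith), show (n:ℤ)^3-n-1+1 = n^3-n by ring,
      sum_split (fun x =>
          (((n^2+2*n)*(x-(n^3+n^2-n-1)) + (n^3+2*n^2-1)*(n^2+n-1))/(n^2+n-1) + 1))
        (n^2+n-1) (n^3-n-1) (n^3+n^2-n-1) (by nlinarith) (by nlinarith),
      show (n:ℤ)^3-n-1+1 = n^3-n by ring]
    have h3 : ∑ x ∈ Finset.Icc (n^2+n-1 : ℤ) (n^3-n-1), ((colS n x).card : ℤ)
        = ∑ x ∈ Finset.Icc (n^2+n-1 : ℤ) (n^3-n-1),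
            (((n^2+2*n)*(x-(n^3+n^2-n-1)) + (n^3+2*n^2-1)*(n^2+n-1))/(n^2+n-1) + 1) := by
      apply Finset.sum_congr rfl
      intro x hx
      simp only [Finset.mem_Icc] at hx
      exact cardseg3 n x hn hx.1 hx.2
    have h4 : ∑ x ∈ Finset.Icc (n^3-n : ℤ) (n^3+n^2-n-1), ((colS n x).card : ℤ)
        = ∑ x ∈ Finset.Icc (n^3-n : ℤ) (n^3+n^2-n-1),
            ((((n^2+2*n)*(x-(n^3+n^2-n-1)) + (n^3+2*n^2-1)*(n^2+n-1))/(n^2+n-1) + 1)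
              - (((n^3+2*n^2-1)*(x-(n^3-n-1)) - 1)/n^2 + 1)) := by
      apply Finset.sum_congr rfl
      intro x hx
      simp only [Finset.mem_Icc] at hx
      exact cardseg4 n x hn hx.1 hx.2
    rw [h3, h4, Finset.sum_sub_distrib]
    ring
  rw [h1, h2, h34]
  have e1 := E1 n hn
  have e2 := E2 n hn
  have e3 := E3 n hn
  have e4 := E4 n hn
  linarith
theorem stmt16 (K N M m : ℤ) (hK : 4 ≤ K) (hN : N = K - 2) (hM : M = N ^ 2 - 1)
    (hm : m = N * (M + N) - 1)
    (P : Set (ℝ × ℝ))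
    (hP : P = convexHull ℝ
      ({((0 : ℝ), (0 : ℝ)),
        (((M * N - 1 : ℤ) : ℝ), 0),
        (((N * (M + N) - 1 : ℤ) : ℝ), ((K * N ^ 2 - 1 : ℤ) : ℝ)),
        (((M + N - 1 : ℤ) : ℝ), ((K * N - 1 : ℤ) : ℝ)),
        (((N - 1 : ℤ) : ℝ), ((N : ℤ) : ℝ))} : Set (ℝ × ℝ))) :
    2 * (Set.ncard {z : ℤ × ℤ | ((z.1 : ℝ), (z.2 : ℝ)) ∈ P} : ℤ) =
        K * M * N ^ 3 - K * N ^ 2 + 2 * N + M + 3 ∧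
      m * (m + 1) + 2 - 2 * (Set.ncard {z : ℤ × ℤ | ((z.1 : ℝ), (z.2 : ℝ)) ∈ P} : ℤ) =
        (K - 2) * (K - 3) := by
  subst hM hm
  have hKN : K = N + 2 := by omega
  subst hKN
  have hn : 2 ≤ N := by omega
  have hν : (2:ℝ) ≤ (N:ℝ) := by exact_mod_cast hn
  have hμ : (0:ℤ) ≤ N - 2 := by omega
  have P2 := pow_nonneg hμ 2
  have P3 := pow_nonneg hμ 3
  have P4 := pow_nonneg hμ 4
  have P5 := pow_nonneg hμ 5
  have hb3 : (0:ℤ) < N^2+N-1 := by nlinarith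
  have hsq : (0:ℤ) < N^2 := by positivity
  have v1 : (((N^2-1) * N - 1 : ℤ) : ℝ) = (N:ℝ)^3-(N:ℝ)-1 := by push_cast; ring
  have v2 : ((N * ((N^2-1) + N) - 1 : ℤ) : ℝ) = (N:ℝ)^3+(N:ℝ)^2-(N:ℝ)-1 := by push_cast; ring
  have v3 : (((N+2) * N ^ 2 - 1 : ℤ) : ℝ) = (N:ℝ)^3+2*(N:ℝ)^2-1 := by push_cast; ring
  have v4 : (((N^2-1) + N - 1 : ℤ) : ℝ) = (N:ℝ)^2+(N:ℝ)-2 := by push_cast; ring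
  have v5 : (((N+2) * N - 1 : ℤ) : ℝ) = (N:ℝ)^2+2*(N:ℝ)-1 := by push_cast; ring
  have v6 : ((N - 1 : ℤ) : ℝ) = (N:ℝ)-1 := by push_cast; ring
  have hPeq : P = {p : ℝ×ℝ | 0 ≤ p.2 ∧ ((N:ℝ)-1)*p.2 ≤ (N:ℝ)*p.1 ∧
      ((N:ℝ)^2-1)*(p.2-((N:ℝ)^2+2*(N:ℝ)-1)) ≤ ((N:ℝ)^2+(N:ℝ)-1)*(p.1-((N:ℝ)^2+(N:ℝ)-2)) ∧
      ((N:ℝ)^2+(N:ℝ)-1)*(p.2-((N:ℝ)^3+2*(N:ℝ)^2-1))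
        ≤ ((N:ℝ)^2+2*(N:ℝ))*(p.1-((N:ℝ)^3+(N:ℝ)^2-(N:ℝ)-1)) ∧
      ((N:ℝ)^3+2*(N:ℝ)^2-1)*(p.1-((N:ℝ)^3-(N:ℝ)-1)) ≤ (N:ℝ)^2*p.2} := by
    rw [hP, v1, v2, v3, v4, v5, v6]
    exact hull_eq (N:ℝ) hν
  have hset : {z : ℤ × ℤ | ((z.1 : ℝ), (z.2 : ℝ)) ∈ P} = ↑(latF N) := by
    ext z
    rw [hPeq]
    simp only [Set.mem_setOf_eq, Finset.coe_filter, latF, Finset.mem_coe,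
      Finset.mem_filter, Finset.mem_product, Finset.mem_Icc]
    constructor
    · rintro ⟨r1, r2, r3, r4, r5⟩
      have c1 : (0:ℤ) ≤ z.2 := by exact_mod_cast r1
      have c2 : (N-1)*z.2 ≤ N*z.1 := by exact_mod_cast r2
      have c3 : (N^2-1)*(z.2-(N^2+2*N-1)) ≤ (N^2+N-1)*(z.1-(N^2+N-2)) := by
        push_cast at r3 ⊢
        exact_mod_cast r3
      have c4 : (N^2+N-1)*(z.2-(N^3+2*N^2-1)) ≤ (N^2+2*N)*(z.1-(N^3+N^2-N-1)) := by
        push_cast at r4 ⊢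
        exact_mod_cast r4
      have c5 : (N^3+2*N^2-1)*(z.1-(N^3-N-1)) ≤ N^2*z.2 := by
        push_cast at r5 ⊢
        exact_mod_cast r5
      have hx0 : 0 ≤ z.1 := by
        have h0 : 0 ≤ N*z.1 := le_trans (mul_nonneg (by omega) c1) c2
        rcases le_or_gt 0 z.1 with h|h
        · exact h
        · have : N*z.1 ≤ N*(-1) := mul_le_mul_of_nonneg_left (by omega) (by omega)
          linarith
      have hxB : z.1 ≤ N^3+N^2-N-1 := by
        have k1 : (N^2+N-1) * ((N^3+2*N^2-1)*(z.1-(N^3-N-1)) - N^2*z.2) ≤ 0 :=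
          mul_nonpos_of_nonneg_of_nonpos (by linarith) (by linarith)
        have k2 : N^2 * ((N^2+N-1)*(z.2-(N^3+2*N^2-1)) - (N^2+2*N)*(z.1-(N^3+N^2-N-1))) ≤ 0 :=
          mul_nonpos_of_nonneg_of_nonpos (by positivity) (by linarith)
        have key : (N^5+2*N^4-N^3-3*N^2-N+1)*(z.1 - (N^3+N^2-N-1)) ≤ 0 := by linarith
        have hcoef : (0:ℤ) < N^5+2*N^4-N^3-3*N^2-N+1 := by
          linarith [hμ, P2, P3, P4, P5]
        by_contra h
        push_neg at h
        have : (N^5+2*N^4-N^3-3*N^2-N+1)*1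
            ≤ (N^5+2*N^4-N^3-3*N^2-N+1)*(z.1 - (N^3+N^2-N-1)) :=
          mul_le_mul_of_nonneg_left (by omega) (by linarith)
        linarith
      have hyB : z.2 ≤ N^3+2*N^2-1 := by
        have hq : (N^2+2*N)*(z.1-(N^3+N^2-N-1)) ≤ 0 :=
          mul_nonpos_of_nonneg_of_nonpos (by nlinarith) (by linarith)
        by_contra h
        push_neg at h
        have : (N^2+N-1)*1 ≤ (N^2+N-1)*(z.2-(N^3+2*N^2-1)) :=
          mul_le_mul_of_nonneg_left (by omega) (by linarith)
        linarith
      exact ⟨⟨⟨hx0, hxB⟩, ⟨c1, hyB⟩⟩, c1, c2, c3, c4, c5⟩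
    · rintro ⟨-, c1, c2, c3, c4, c5⟩
      refine ⟨by exact_mod_cast c1, by exact_mod_cast c2, ?_, ?_, ?_⟩
      · push_cast
        exact_mod_cast c3
      · push_cast
        exact_mod_cast c4
      · push_cast
        exact_mod_cast c5
  rw [hset, Set.ncard_coe_finset]
  have hc := count_eq N hn
  constructor
  · linarith
  · linarith
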